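/- Let X be the conjugation quandle on the conjugacy class of the 3-cycle (1 2 3) in the alternating group A₄ (a four-element indecomposable quandle in which every translation φᵢ has order 3). Then the finite enveloping group Ḡ_X = G_X / K, where K is the normal closure in G_X of {x_i³ : i ∈ X}, is isomorphic to SL(2,3), the group of 2×2 matrices of determinant 1 over the field with three elements. -/

import Mathlib

open Quandles

/-- A conjugacy class in a group, as a quandle under conjugation. -/
instance conjClassQuandle (G : Type) [Group G] (a : G) : Quandle {x : G // IsConj a x} where
  act x y := ⟨x.1 * y.1 * x.1⁻¹, y.2.trans (isConj_iff.mpr ⟨x.1, rfl⟩)⟩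
  self_distrib := by
    intro x y z
    apply Subtype.ext
    show x.1 * (y.1 * z.1 * y.1⁻¹) * x.1⁻¹ =
      (x.1 * y.1 * x.1⁻¹) * (x.1 * z.1 * x.1⁻¹) * (x.1 * y.1 * x.1⁻¹)⁻¹
    group
  invAct x y := ⟨x.1⁻¹ * y.1 * x.1, y.2.trans (isConj_iff.mpr ⟨x.1⁻¹, by group⟩)⟩
  left_inv x := by
    intro y
    apply Subtype.ext
    show x.1⁻¹ * (x.1 * y.1 * x.1⁻¹) * x.1 = y.1
    group
  right_inv x := by
    intro y
    apply Subtype.ext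
    show x.1 * (x.1⁻¹ * y.1 * x.1) * x.1⁻¹ = y.1
    group
  fix := by
    intro x
    apply Subtype.ext
    show x.1 * x.1 * x.1⁻¹ = x.1
    group

/-- The 3-cycle `(1 2 3)` in the symmetric group on four letters. -/
def c123 : Equiv.Perm (Fin 4) := Equiv.swap 0 1 * Equiv.swap 1 2

theorem c123_mem : c123 ∈ alternatingGroup (Fin 4) := by
  rw [Equiv.Perm.mem_alternatingGroup]
  decide

/-- The conjugacy class of the 3-cycle `(1 2 3)` in the alternating group `A₄`,
as a conjugation quandle. -/
def XA4 : Type :=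
  {x : alternatingGroup (Fin 4) // IsConj (⟨c123, c123_mem⟩ : alternatingGroup (Fin 4)) x}

instance : Quandle XA4 :=
  conjClassQuandle (alternatingGroup (Fin 4)) ⟨c123, c123_mem⟩

/-- The kernel of the projection onto the finite enveloping group: the normal closure
of the set of the cubes `x_i³` (every translation of `XA4` has order 3). -/
def KA4 : Subgroup (Rack.EnvelGroup XA4) :=
  Subgroup.normalClosure
    {w | ∃ i : XA4, w = (Rack.toEnvelGroup XA4 i : Rack.EnvelGroup XA4) ^ 3}

instance : KA4.Normal := Subgroup.normalClosure_normal


namespace Stmt18Aux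

instance : DecidablePred fun x : alternatingGroup (Fin 4) =>
    IsConj (⟨c123, c123_mem⟩ : alternatingGroup (Fin 4)) x :=
  fun _ => decidable_of_iff _ isConj_iff.symm

instance : DecidableEq XA4 := fun a b =>
  decidable_of_iff (a.1 = b.1) Subtype.ext_iff.symm

instance : Fintype XA4 := Subtype.fintype _

def q0 : XA4 := ⟨⟨Equiv.swap 1 3 * Equiv.swap 3 2, by
    rw [Equiv.Perm.mem_alternatingGroup]; decide⟩,
  isConj_iff.mpr ⟨⟨Equiv.swap 0 1 * Equiv.swap 1 3, by
    rw [Equiv.Perm.mem_alternatingGroup]; decide⟩, by decide⟩⟩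

def q1 : XA4 := ⟨⟨c123, c123_mem⟩, IsConj.refl _⟩

def q2 : XA4 := ⟨⟨Equiv.swap 0 2 * Equiv.swap 2 3, by
    rw [Equiv.Perm.mem_alternatingGroup]; decide⟩,
  isConj_iff.mpr ⟨⟨Equiv.swap 1 2 * Equiv.swap 2 3, by
    rw [Equiv.Perm.mem_alternatingGroup]; decide⟩, by decide⟩⟩

def q3 : XA4 := ⟨⟨Equiv.swap 0 3 * Equiv.swap 3 1, by
    rw [Equiv.Perm.mem_alternatingGroup]; decide⟩,
  isConj_iff.mpr ⟨⟨Equiv.swap 1 3 * Equiv.swap 3 2, by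
    rw [Equiv.Perm.mem_alternatingGroup]; decide⟩, by decide⟩⟩

theorem mem4 : ∀ x : XA4, x = q0 ∨ x = q1 ∨ x = q2 ∨ x = q3 := by decide

abbrev G3 := Matrix.SpecialLinearGroup (Fin 2) (ZMod 3)

instance : DecidableEq G3 := fun A B =>
  decidable_of_iff (A.1 = B.1) Subtype.ext_iff.symm

def m0 : G3 := ⟨!![0,1;2,2], by decide⟩
def m1 : G3 := ⟨!![1,0;2,1], by decide⟩
def m2 : G3 := ⟨!![1,1;0,1], by decide⟩
def m3 : G3 := ⟨!![2,1;2,0], by decide⟩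

def Mf (x : XA4) : G3 :=
  if x = q0 then m0 else if x = q1 then m1 else if x = q2 then m2 else m3

theorem Mf_act : ∀ x y : XA4, Mf (x ◃ y) = Mf x * Mf y * (Mf x)⁻¹ := by decide

def rho : XA4 →◃ Quandle.Conj G3 where
  toFun := Mf
  map_act' := @fun x y => Mf_act x y

def Phi0 : Rack.EnvelGroup XA4 →* G3 := Rack.toEnvelGroup.map rho

theorem Phi0_gen (i : XA4) : Phi0 (Rack.toEnvelGroup XA4 i) = Mf i := rfl

theorem Mf_cube : ∀ i : XA4, (Mf i) ^ 3 = 1 := by decide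

theorem K_le_ker : KA4 ≤ Phi0.ker := by
  apply Subgroup.normalClosure_le_normal
  rintro w ⟨i, rfl⟩
  simp only [SetLike.mem_coe, MonoidHom.mem_ker, map_pow, Phi0_gen, Mf_cube]

abbrev Gbar := Rack.EnvelGroup XA4 ⧸ KA4

def Phi : Gbar →* G3 := QuotientGroup.lift KA4 Phi0 K_le_ker

def gen (i : XA4) : Gbar := QuotientGroup.mk (Rack.toEnvelGroup XA4 i)

theorem Phi_gen (i : XA4) : Phi (gen i) = Mf i := rfl

theorem rel (i j : XA4) : gen i * gen j = gen (i ◃ j) * gen i := by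
  have h : Rack.toEnvelGroup XA4 (i ◃ j) =
      Rack.toEnvelGroup XA4 i * Rack.toEnvelGroup XA4 j * (Rack.toEnvelGroup XA4 i)⁻¹ :=
    (Rack.toEnvelGroup XA4).map_act' (x := i) (y := j)
  have hg : gen (i ◃ j) = gen i * gen j * (gen i)⁻¹ := by
    unfold gen
    rw [h]
    rfl
  rw [hg]
  group

theorem cube (i : XA4) : gen i ^ 3 = 1 := by
  have h0 : (Rack.toEnvelGroup XA4 i : Rack.EnvelGroup XA4) ^ 3 ∈ KA4 :=
    Subgroup.subset_normalClosure ⟨i, rfl⟩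
  have h := (QuotientGroup.eq_one_iff _).mpr h0
  unfold gen
  rw [← QuotientGroup.mk_pow]
  exact h

def wprod (l : List XA4) : Gbar := (l.map gen).prod

theorem wprod_cons (i : XA4) (l : List XA4) : wprod (i :: l) = gen i * wprod l := rfl

theorem relW (u v : List XA4) (i j k : XA4) (h : i ◃ j = k) :
    wprod (u ++ i :: j :: v) = wprod (u ++ k :: i :: v) := by
  subst h
  induction u with
  | nil =>
    rw [List.nil_append, List.nil_append, wprod_cons, wprod_cons, wprod_cons, wprod_cons,
      ← mul_assoc, ← mul_assoc, rel]
  | cons a u ih =>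
    rw [List.cons_append, List.cons_append, wprod_cons, wprod_cons, ih]

theorem cubeW (u v : List XA4) (i : XA4) :
    wprod (u ++ i :: i :: i :: v) = wprod (u ++ v) := by
  induction u with
  | nil =>
    rw [List.nil_append, List.nil_append, wprod_cons, wprod_cons, wprod_cons,
      ← mul_assoc, ← mul_assoc, show gen i * gen i * gen i = gen i ^ 3 by rw [pow_succ, pow_succ, pow_one], cube, one_mul]
  | cons a u ih =>
    rw [List.cons_append, List.cons_append, wprod_cons, wprod_cons, ih]


theorem der0 : wprod [q0, q1] = wprod [q3, q0] :=
  (relW [] [] q0 q1 q3 (by decide))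

theorem der1 : wprod [q0, q2] = wprod [q1, q0] :=
  (relW [] [] q0 q2 q1 (by decide))

theorem der2 : wprod [q0, q3] = wprod [q2, q0] :=
  (relW [] [] q0 q3 q2 (by decide))

theorem der3 : wprod [q0, q0, q0] = wprod [] :=
  (cubeW [] [] q0)

theorem der4 : wprod [q0, q1, q0] = wprod [q3, q0, q0] :=
  (relW [] [q0] q0 q1 q3 (by decide))

theorem der5 : wprod [q0, q2, q0] = wprod [q1, q0, q0] :=
  (relW [] [q0] q0 q2 q1 (by decide))

theorem der6 : wprod [q0, q3, q0] = wprod [q2, q0, q0] :=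
  (relW [] [q0] q0 q3 q2 (by decide))

theorem der7 : wprod [q0, q1, q1] = wprod [q3, q3, q0] :=
  ((relW [] [q1] q0 q1 q3 (by decide))).trans (relW [q3] [] q0 q1 q3 (by decide))

theorem der8 : wprod [q0, q3, q1] = wprod [q3, q1, q0] :=
  ((relW [] [q1] q3 q2 q0 (by decide)).symm).trans (relW [q3] [] q1 q0 q2 (by decide)).symm

theorem der9 : wprod [q0, q2, q2] = wprod [q1, q1, q0] :=
  ((relW [] [q2] q0 q2 q1 (by decide))).trans (relW [q1] [] q0 q2 q1 (by decide))

theorem der10 : wprod [q0, q3, q3] = wprod [q2, q2, q0] :=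
  ((relW [] [q3] q0 q3 q2 (by decide))).trans (relW [q2] [] q0 q3 q2 (by decide))

theorem der11 : wprod [q0, q1, q0, q0] = wprod [q3] :=
  ((relW [] [q0, q0] q0 q1 q3 (by decide))).trans (cubeW [q3] [] q0)

theorem der12 : wprod [q0, q2, q0, q0] = wprod [q1] :=
  ((relW [] [q0, q0] q0 q2 q1 (by decide))).trans (cubeW [q1] [] q0)

theorem der13 : wprod [q0, q3, q0, q0] = wprod [q2] :=
  ((relW [] [q0, q0] q0 q3 q2 (by decide))).trans (cubeW [q2] [] q0)

theorem der14 : wprod [q0, q1, q1, q0] = wprod [q3, q3, q0, q0] :=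
  ((relW [] [q1, q0] q0 q1 q3 (by decide))).trans (relW [q3] [q0] q0 q1 q3 (by decide))

theorem der15 : wprod [q0, q3, q1, q0] = wprod [q3, q1, q0, q0] :=
  ((relW [] [q1, q0] q3 q2 q0 (by decide)).symm).trans (relW [q3] [q0] q1 q0 q2 (by decide)).symm

theorem der16 : wprod [q0, q2, q2, q0] = wprod [q1, q1, q0, q0] :=
  ((relW [] [q2, q0] q0 q2 q1 (by decide))).trans (relW [q1] [q0] q0 q2 q1 (by decide))

theorem der17 : wprod [q0, q3, q3, q0] = wprod [q2, q2, q0, q0] :=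
  ((relW [] [q3, q0] q0 q3 q2 (by decide))).trans (relW [q2] [q0] q0 q3 q2 (by decide))

theorem der18 : wprod [q0, q1, q1, q0, q0] = wprod [q3, q3] :=
  (((relW [] [q1, q0, q0] q0 q1 q3 (by decide))).trans (relW [q3] [q0, q0] q0 q1 q3 (by decide))).trans (cubeW [q3, q3] [] q0)

theorem der19 : wprod [q0, q3, q1, q0, q0] = wprod [q3, q1] :=
  (((relW [] [q1, q0, q0] q3 q2 q0 (by decide)).symm).trans (relW [q3] [q0, q0] q1 q0 q2 (by decide)).symm).trans (cubeW [q3, q1] [] q0)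

theorem der20 : wprod [q0, q2, q2, q0, q0] = wprod [q1, q1] :=
  (((relW [] [q2, q0, q0] q0 q2 q1 (by decide))).trans (relW [q1] [q0, q0] q0 q2 q1 (by decide))).trans (cubeW [q1, q1] [] q0)

theorem der21 : wprod [q0, q3, q3, q0, q0] = wprod [q2, q2] :=
  (((relW [] [q3, q0, q0] q0 q3 q2 (by decide))).trans (relW [q2] [q0, q0] q0 q3 q2 (by decide))).trans (cubeW [q2, q2] [] q0)

theorem der22 : wprod [q1, q2] = wprod [q3, q1] :=
  (relW [] [] q1 q2 q3 (by decide))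

theorem der23 : wprod [q1, q3] = wprod [q3, q0] :=
  (relW [] [] q3 q0 q1 (by decide)).symm

theorem der24 : wprod [q1, q2, q0] = wprod [q3, q1, q0] :=
  (relW [] [q0] q1 q2 q3 (by decide))

theorem der25 : wprod [q1, q3, q0] = wprod [q3, q0, q0] :=
  (relW [] [q0] q3 q0 q1 (by decide)).symm

theorem der26 : wprod [q1, q1, q1] = wprod [] :=
  (cubeW [] [] q1)

theorem der27 : wprod [q1, q3, q1] = wprod [q3, q3, q0] :=
  ((relW [] [q1] q3 q0 q1 (by decide)).symm).trans (relW [q3] [] q0 q1 q3 (by decide))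

theorem der28 : wprod [q1, q2, q2] = wprod [q2, q2, q0] :=
  ((relW [] [q2] q2 q3 q1 (by decide)).symm).trans (relW [q2] [] q2 q0 q3 (by decide)).symm

theorem der29 : wprod [q1, q3, q3] = wprod [q2, q0, q0] :=
  (((relW [] [q3] q1 q3 q0 (by decide))).trans (relW [q0] [] q3 q0 q1 (by decide)).symm).trans (relW [] [q0] q0 q3 q2 (by decide))

theorem der30 : wprod [q1, q2, q0, q0] = wprod [q3, q1, q0, q0] :=
  (relW [] [q0, q0] q1 q2 q3 (by decide))

theorem der31 : wprod [q1, q3, q0, q0] = wprod [q3] :=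
  ((relW [] [q0, q0] q3 q0 q1 (by decide)).symm).trans (cubeW [q3] [] q0)

theorem der32 : wprod [q1, q1, q1, q0] = wprod [q0] :=
  (cubeW [] [q0] q1)

theorem der33 : wprod [q1, q3, q1, q0] = wprod [q3, q3, q0, q0] :=
  ((relW [] [q1, q0] q3 q0 q1 (by decide)).symm).trans (relW [q3] [q0] q0 q1 q3 (by decide))

theorem der34 : wprod [q1, q2, q2, q0] = wprod [q2, q2, q0, q0] :=
  ((relW [] [q2, q0] q2 q3 q1 (by decide)).symm).trans (relW [q2] [q0] q2 q0 q3 (by decide)).symm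

theorem der35 : wprod [q1, q3, q3, q0] = wprod [q2] :=
  ((((relW [] [q3, q0] q1 q3 q0 (by decide))).trans (relW [q0] [q0] q1 q3 q0 (by decide))).trans (relW [q0, q0] [] q0 q2 q1 (by decide)).symm).trans (cubeW [] [q2] q0)

theorem der36 : wprod [q1, q1, q1, q0, q0] = wprod [q0, q0] :=
  (cubeW [] [q0, q0] q1)

theorem der37 : wprod [q1, q3, q1, q0, q0] = wprod [q3, q3] :=
  (((relW [] [q1, q0, q0] q3 q0 q1 (by decide)).symm).trans (relW [q3] [q0, q0] q0 q1 q3 (by decide))).trans (cubeW [q3, q3] [] q0)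

theorem der38 : wprod [q1, q2, q2, q0, q0] = wprod [q2, q2] :=
  (((relW [] [q2, q0, q0] q2 q3 q1 (by decide)).symm).trans (relW [q2] [q0, q0] q2 q0 q3 (by decide)).symm).trans (cubeW [q2, q2] [] q0)

theorem der39 : wprod [q1, q3, q3, q0, q0] = wprod [q2, q0] :=
  ((((relW [] [q3, q0, q0] q1 q3 q0 (by decide))).trans (relW [q0] [q0, q0] q1 q3 q0 (by decide))).trans (relW [q0, q0] [q0] q0 q2 q1 (by decide)).symm).trans (cubeW [] [q2, q0] q0)

theorem der40 : wprod [q2, q1] = wprod [q1, q0] :=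
  (relW [] [] q1 q0 q2 (by decide)).symm

theorem der41 : wprod [q2, q3] = wprod [q3, q1] :=
  (relW [] [] q3 q1 q2 (by decide)).symm

theorem der42 : wprod [q2, q1, q0] = wprod [q1, q0, q0] :=
  (relW [] [q0] q1 q0 q2 (by decide)).symm

theorem der43 : wprod [q2, q3, q0] = wprod [q3, q1, q0] :=
  (relW [] [q0] q3 q1 q2 (by decide)).symm

theorem der44 : wprod [q2, q1, q1] = wprod [q3, q0, q0] :=
  (((relW [] [q1] q2 q1 q0 (by decide))).trans (relW [q0] [] q1 q0 q2 (by decide)).symm).trans (relW [] [q0] q0 q1 q3 (by decide))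

theorem der45 : wprod [q2, q3, q1] = wprod [q1, q1, q0] :=
  ((relW [] [q1] q2 q3 q1 (by decide))).trans (relW [q1] [] q1 q0 q2 (by decide)).symm

theorem der46 : wprod [q2, q2, q2] = wprod [] :=
  (cubeW [] [] q2)

theorem der47 : wprod [q2, q3, q3] = wprod [q3, q3, q0] :=
  ((relW [] [q3] q3 q1 q2 (by decide)).symm).trans (relW [q3] [] q3 q0 q1 (by decide)).symm

theorem der48 : wprod [q2, q1, q0, q0] = wprod [q1] :=
  ((relW [] [q0, q0] q1 q0 q2 (by decide)).symm).trans (cubeW [q1] [] q0)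

theorem der49 : wprod [q2, q3, q0, q0] = wprod [q3, q1, q0, q0] :=
  (relW [] [q0, q0] q3 q1 q2 (by decide)).symm

theorem der50 : wprod [q2, q1, q1, q0] = wprod [q3] :=
  ((((relW [] [q1, q0] q2 q1 q0 (by decide))).trans (relW [q0] [q0] q2 q1 q0 (by decide))).trans (relW [q0, q0] [] q0 q3 q2 (by decide)).symm).trans (cubeW [] [q3] q0)

theorem der51 : wprod [q2, q3, q1, q0] = wprod [q1, q1, q0, q0] :=
  ((relW [] [q1, q0] q2 q3 q1 (by decide))).trans (relW [q1] [q0] q1 q0 q2 (by decide)).symm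

theorem der52 : wprod [q2, q2, q2, q0] = wprod [q0] :=
  (cubeW [] [q0] q2)

theorem der53 : wprod [q2, q3, q3, q0] = wprod [q3, q3, q0, q0] :=
  ((relW [] [q3, q0] q3 q1 q2 (by decide)).symm).trans (relW [q3] [q0] q3 q0 q1 (by decide)).symm

theorem der54 : wprod [q2, q1, q1, q0, q0] = wprod [q3, q0] :=
  ((((relW [] [q1, q0, q0] q2 q1 q0 (by decide))).trans (relW [q0] [q0, q0] q2 q1 q0 (by decide))).trans (relW [q0, q0] [q0] q0 q3 q2 (by decide)).symm).trans (cubeW [] [q3, q0] q0)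

theorem der55 : wprod [q2, q3, q1, q0, q0] = wprod [q1, q1] :=
  (((relW [] [q1, q0, q0] q2 q3 q1 (by decide))).trans (relW [q1] [q0, q0] q1 q0 q2 (by decide)).symm).trans (cubeW [q1, q1] [] q0)

theorem der56 : wprod [q2, q2, q2, q0, q0] = wprod [q0, q0] :=
  (cubeW [] [q0, q0] q2)

theorem der57 : wprod [q2, q3, q3, q0, q0] = wprod [q3, q3] :=
  (((relW [] [q3, q0, q0] q3 q1 q2 (by decide)).symm).trans (relW [q3] [q0, q0] q3 q0 q1 (by decide)).symm).trans (cubeW [q3, q3] [] q0)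

theorem der58 : wprod [q3, q2] = wprod [q2, q0] :=
  (relW [] [] q2 q0 q3 (by decide)).symm

theorem der59 : wprod [q3, q2, q0] = wprod [q2, q0, q0] :=
  (relW [] [q0] q2 q0 q3 (by decide)).symm

theorem der60 : wprod [q3, q1, q1] = wprod [q1, q1, q0] :=
  ((relW [] [q1] q1 q2 q3 (by decide)).symm).trans (relW [q1] [] q1 q0 q2 (by decide)).symm

theorem der61 : wprod [q3, q3, q1] = wprod [q2, q2, q0] :=
  (((relW [q3] [] q3 q1 q2 (by decide))).trans (relW [] [q3] q2 q0 q3 (by decide)).symm).trans (relW [q2] [] q0 q3 q2 (by decide))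

theorem der62 : wprod [q3, q2, q2] = wprod [q1, q0, q0] :=
  (((relW [] [q2] q3 q2 q0 (by decide))).trans (relW [q0] [] q2 q0 q3 (by decide)).symm).trans (relW [] [q0] q0 q2 q1 (by decide))

theorem der63 : wprod [q3, q3, q3] = wprod [] :=
  (cubeW [] [] q3)

theorem der64 : wprod [q3, q2, q0, q0] = wprod [q2] :=
  ((relW [] [q0, q0] q2 q0 q3 (by decide)).symm).trans (cubeW [q2] [] q0)

theorem der65 : wprod [q3, q1, q1, q0] = wprod [q1, q1, q0, q0] :=
  ((relW [] [q1, q0] q1 q2 q3 (by decide)).symm).trans (relW [q1] [q0] q1 q0 q2 (by decide)).symm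

theorem der66 : wprod [q3, q3, q1, q0] = wprod [q2, q2, q0, q0] :=
  (((relW [q3] [q0] q3 q1 q2 (by decide))).trans (relW [] [q3, q0] q2 q0 q3 (by decide)).symm).trans (relW [q2] [q0] q0 q3 q2 (by decide))

theorem der67 : wprod [q3, q2, q2, q0] = wprod [q1] :=
  ((((relW [] [q2, q0] q3 q2 q0 (by decide))).trans (relW [q0] [q0] q3 q2 q0 (by decide))).trans (relW [q0, q0] [] q0 q1 q3 (by decide)).symm).trans (cubeW [] [q1] q0)

theorem der68 : wprod [q3, q3, q3, q0] = wprod [q0] :=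
  (cubeW [] [q0] q3)

theorem der69 : wprod [q3, q1, q1, q0, q0] = wprod [q1, q1] :=
  (((relW [] [q1, q0, q0] q1 q2 q3 (by decide)).symm).trans (relW [q1] [q0, q0] q1 q0 q2 (by decide)).symm).trans (cubeW [q1, q1] [] q0)

theorem der70 : wprod [q3, q3, q1, q0, q0] = wprod [q2, q2] :=
  ((((relW [q3] [q0, q0] q3 q1 q2 (by decide))).trans (relW [] [q3, q0, q0] q2 q0 q3 (by decide)).symm).trans (relW [q2] [q0, q0] q0 q3 q2 (by decide))).trans (cubeW [q2, q2] [] q0)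

theorem der71 : wprod [q3, q2, q2, q0, q0] = wprod [q1, q0] :=
  ((((relW [] [q2, q0, q0] q3 q2 q0 (by decide))).trans (relW [q0] [q0, q0] q3 q2 q0 (by decide))).trans (relW [q0, q0] [q0] q0 q1 q3 (by decide)).symm).trans (cubeW [] [q1, q0] q0)

theorem der72 : wprod [q3, q3, q3, q0, q0] = wprod [q0, q0] :=
  (cubeW [] [q0, q0] q3)

def Wf : Fin 24 → List XA4 :=
  ![[], [q0], [q1], [q2], [q3], [q0, q0], [q1, q0], [q1, q1], [q2, q0], [q2, q2], [q3, q0], [q3, q1], [q3, q3], [q1, q0, q0], [q1, q1, q0], [q2, q0, q0], [q2, q2, q0], [q3, q0, q0], [q3, q1, q0], [q3, q3, q0], [q1, q1, q0, q0], [q2, q2, q0, q0], [q3, q1, q0, q0], [q3, q3, q0, q0]]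

theorem stepS : ∀ (i : XA4) (k : Fin 24), ∃ k' : Fin 24,
    gen i * wprod (Wf k) = wprod (Wf k') := by
  intro i k
  rcases mem4 i with rfl | rfl | rfl | rfl <;> fin_cases k
  exacts [⟨1, (wprod_cons q0 []).symm⟩,
    ⟨5, (wprod_cons q0 [q0]).symm⟩,
    ⟨10, ((wprod_cons q0 [q1]).symm.trans der0)⟩,
    ⟨6, ((wprod_cons q0 [q2]).symm.trans der1)⟩,
    ⟨8, ((wprod_cons q0 [q3]).symm.trans der2)⟩,
    ⟨0, ((wprod_cons q0 [q0, q0]).symm.trans der3)⟩,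
    ⟨17, ((wprod_cons q0 [q1, q0]).symm.trans der4)⟩,
    ⟨19, ((wprod_cons q0 [q1, q1]).symm.trans der7)⟩,
    ⟨13, ((wprod_cons q0 [q2, q0]).symm.trans der5)⟩,
    ⟨14, ((wprod_cons q0 [q2, q2]).symm.trans der9)⟩,
    ⟨15, ((wprod_cons q0 [q3, q0]).symm.trans der6)⟩,
    ⟨18, ((wprod_cons q0 [q3, q1]).symm.trans der8)⟩,
    ⟨16, ((wprod_cons q0 [q3, q3]).symm.trans der10)⟩,
    ⟨4, ((wprod_cons q0 [q1, q0, q0]).symm.trans der11)⟩,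
    ⟨23, ((wprod_cons q0 [q1, q1, q0]).symm.trans der14)⟩,
    ⟨2, ((wprod_cons q0 [q2, q0, q0]).symm.trans der12)⟩,
    ⟨20, ((wprod_cons q0 [q2, q2, q0]).symm.trans der16)⟩,
    ⟨3, ((wprod_cons q0 [q3, q0, q0]).symm.trans der13)⟩,
    ⟨22, ((wprod_cons q0 [q3, q1, q0]).symm.trans der15)⟩,
    ⟨21, ((wprod_cons q0 [q3, q3, q0]).symm.trans der17)⟩,
    ⟨12, ((wprod_cons q0 [q1, q1, q0, q0]).symm.trans der18)⟩,
    ⟨7, ((wprod_cons q0 [q2, q2, q0, q0]).symm.trans der20)⟩,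
    ⟨11, ((wprod_cons q0 [q3, q1, q0, q0]).symm.trans der19)⟩,
    ⟨9, ((wprod_cons q0 [q3, q3, q0, q0]).symm.trans der21)⟩,
    ⟨2, (wprod_cons q1 []).symm⟩,
    ⟨6, (wprod_cons q1 [q0]).symm⟩,
    ⟨7, (wprod_cons q1 [q1]).symm⟩,
    ⟨11, ((wprod_cons q1 [q2]).symm.trans der22)⟩,
    ⟨10, ((wprod_cons q1 [q3]).symm.trans der23)⟩,
    ⟨13, (wprod_cons q1 [q0, q0]).symm⟩,
    ⟨14, (wprod_cons q1 [q1, q0]).symm⟩,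
    ⟨0, ((wprod_cons q1 [q1, q1]).symm.trans der26)⟩,
    ⟨18, ((wprod_cons q1 [q2, q0]).symm.trans der24)⟩,
    ⟨16, ((wprod_cons q1 [q2, q2]).symm.trans der28)⟩,
    ⟨17, ((wprod_cons q1 [q3, q0]).symm.trans der25)⟩,
    ⟨19, ((wprod_cons q1 [q3, q1]).symm.trans der27)⟩,
    ⟨15, ((wprod_cons q1 [q3, q3]).symm.trans der29)⟩,
    ⟨20, (wprod_cons q1 [q1, q0, q0]).symm⟩,
    ⟨1, ((wprod_cons q1 [q1, q1, q0]).symm.trans der32)⟩,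
    ⟨22, ((wprod_cons q1 [q2, q0, q0]).symm.trans der30)⟩,
    ⟨21, ((wprod_cons q1 [q2, q2, q0]).symm.trans der34)⟩,
    ⟨4, ((wprod_cons q1 [q3, q0, q0]).symm.trans der31)⟩,
    ⟨23, ((wprod_cons q1 [q3, q1, q0]).symm.trans der33)⟩,
    ⟨3, ((wprod_cons q1 [q3, q3, q0]).symm.trans der35)⟩,
    ⟨5, ((wprod_cons q1 [q1, q1, q0, q0]).symm.trans der36)⟩,
    ⟨9, ((wprod_cons q1 [q2, q2, q0, q0]).symm.trans der38)⟩,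
    ⟨12, ((wprod_cons q1 [q3, q1, q0, q0]).symm.trans der37)⟩,
    ⟨8, ((wprod_cons q1 [q3, q3, q0, q0]).symm.trans der39)⟩,
    ⟨3, (wprod_cons q2 []).symm⟩,
    ⟨8, (wprod_cons q2 [q0]).symm⟩,
    ⟨6, ((wprod_cons q2 [q1]).symm.trans der40)⟩,
    ⟨9, (wprod_cons q2 [q2]).symm⟩,
    ⟨11, ((wprod_cons q2 [q3]).symm.trans der41)⟩,
    ⟨15, (wprod_cons q2 [q0, q0]).symm⟩,
    ⟨13, ((wprod_cons q2 [q1, q0]).symm.trans der42)⟩,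
    ⟨17, ((wprod_cons q2 [q1, q1]).symm.trans der44)⟩,
    ⟨16, (wprod_cons q2 [q2, q0]).symm⟩,
    ⟨0, ((wprod_cons q2 [q2, q2]).symm.trans der46)⟩,
    ⟨18, ((wprod_cons q2 [q3, q0]).symm.trans der43)⟩,
    ⟨14, ((wprod_cons q2 [q3, q1]).symm.trans der45)⟩,
    ⟨19, ((wprod_cons q2 [q3, q3]).symm.trans der47)⟩,
    ⟨2, ((wprod_cons q2 [q1, q0, q0]).symm.trans der48)⟩,
    ⟨4, ((wprod_cons q2 [q1, q1, q0]).symm.trans der50)⟩,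
    ⟨21, (wprod_cons q2 [q2, q0, q0]).symm⟩,
    ⟨1, ((wprod_cons q2 [q2, q2, q0]).symm.trans der52)⟩,
    ⟨22, ((wprod_cons q2 [q3, q0, q0]).symm.trans der49)⟩,
    ⟨20, ((wprod_cons q2 [q3, q1, q0]).symm.trans der51)⟩,
    ⟨23, ((wprod_cons q2 [q3, q3, q0]).symm.trans der53)⟩,
    ⟨10, ((wprod_cons q2 [q1, q1, q0, q0]).symm.trans der54)⟩,
    ⟨5, ((wprod_cons q2 [q2, q2, q0, q0]).symm.trans der56)⟩,
    ⟨7, ((wprod_cons q2 [q3, q1, q0, q0]).symm.trans der55)⟩,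
    ⟨12, ((wprod_cons q2 [q3, q3, q0, q0]).symm.trans der57)⟩,
    ⟨4, (wprod_cons q3 []).symm⟩,
    ⟨10, (wprod_cons q3 [q0]).symm⟩,
    ⟨11, (wprod_cons q3 [q1]).symm⟩,
    ⟨8, ((wprod_cons q3 [q2]).symm.trans der58)⟩,
    ⟨12, (wprod_cons q3 [q3]).symm⟩,
    ⟨17, (wprod_cons q3 [q0, q0]).symm⟩,
    ⟨18, (wprod_cons q3 [q1, q0]).symm⟩,
    ⟨14, ((wprod_cons q3 [q1, q1]).symm.trans der60)⟩,
    ⟨15, ((wprod_cons q3 [q2, q0]).symm.trans der59)⟩,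
    ⟨13, ((wprod_cons q3 [q2, q2]).symm.trans der62)⟩,
    ⟨19, (wprod_cons q3 [q3, q0]).symm⟩,
    ⟨16, ((wprod_cons q3 [q3, q1]).symm.trans der61)⟩,
    ⟨0, ((wprod_cons q3 [q3, q3]).symm.trans der63)⟩,
    ⟨22, (wprod_cons q3 [q1, q0, q0]).symm⟩,
    ⟨20, ((wprod_cons q3 [q1, q1, q0]).symm.trans der65)⟩,
    ⟨3, ((wprod_cons q3 [q2, q0, q0]).symm.trans der64)⟩,
    ⟨2, ((wprod_cons q3 [q2, q2, q0]).symm.trans der67)⟩,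
    ⟨23, (wprod_cons q3 [q3, q0, q0]).symm⟩,
    ⟨21, ((wprod_cons q3 [q3, q1, q0]).symm.trans der66)⟩,
    ⟨1, ((wprod_cons q3 [q3, q3, q0]).symm.trans der68)⟩,
    ⟨7, ((wprod_cons q3 [q1, q1, q0, q0]).symm.trans der69)⟩,
    ⟨6, ((wprod_cons q3 [q2, q2, q0, q0]).symm.trans der71)⟩,
    ⟨9, ((wprod_cons q3 [q3, q1, q0, q0]).symm.trans der70)⟩,
    ⟨5, ((wprod_cons q3 [q3, q3, q0, q0]).symm.trans der72)⟩]


def SS : Set Gbar := Set.range (fun k => wprod (Wf k))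

theorem key : ∀ z : Rack.PreEnvelGroup XA4, ∀ k : Fin 24, ∃ k' : Fin 24,
    (QuotientGroup.mk (⟦z⟧ : Rack.EnvelGroup XA4) : Gbar) * wprod (Wf k) = wprod (Wf k') := by
  intro z
  induction z with
  | unit => exact fun k => ⟨k, one_mul _⟩
  | incl i => exact fun k => stepS i k
  | mul a b iha ihb =>
    intro k
    obtain ⟨k1, hb⟩ := ihb k
    obtain ⟨k2, ha⟩ := iha k1
    refine ⟨k2, ?_⟩
    have hmul : (QuotientGroup.mk (⟦a.mul b⟧ : Rack.EnvelGroup XA4) : Gbar) =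
        (QuotientGroup.mk (⟦a⟧ : Rack.EnvelGroup XA4) : Gbar) *
        (QuotientGroup.mk (⟦b⟧ : Rack.EnvelGroup XA4) : Gbar) := rfl
    rw [hmul, mul_assoc, hb, ha]
  | inv a iha =>
    intro k
    set g : Gbar := (QuotientGroup.mk (⟦a⟧ : Rack.EnvelGroup XA4) : Gbar) with hg
    have hfin : SS.Finite := Set.finite_range _
    have hmaps : Set.MapsTo (fun t => g * t) SS SS := by
      rintro t ⟨k0, rfl⟩
      obtain ⟨k1, h1⟩ := iha k0
      exact ⟨k1, h1.symm⟩
    have hinj : Set.InjOn (fun t => g * t) SS :=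
      (mul_right_injective g).injOn
    have hsurj : Set.SurjOn (fun t => g * t) SS SS :=
      ((hfin.injOn_iff_bijOn_of_mapsTo hmaps).mp hinj).surjOn
    obtain ⟨t, ⟨k1, rfl⟩, ht⟩ := hsurj ⟨k, rfl⟩
    refine ⟨k1, ?_⟩
    have hinv : (QuotientGroup.mk (⟦a.inv⟧ : Rack.EnvelGroup XA4) : Gbar) = g⁻¹ := rfl
    rw [hinv]
    simp only at ht
    rw [← ht, inv_mul_cancel_left]

theorem mem_S : ∀ y : Gbar, ∃ k : Fin 24, y = wprod (Wf k) := by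
  intro y
  induction y using QuotientGroup.induction_on with
  | H g =>
    induction g using Quotient.inductionOn with
    | h z =>
      obtain ⟨k, hk⟩ := key z 0
      refine ⟨k, ?_⟩
      have h0 : wprod (Wf 0) = 1 := rfl
      rw [h0, mul_one] at hk
      exact hk

theorem Phi_wprod : ∀ l : List XA4, Phi (wprod l) = (l.map Mf).prod := by
  intro l
  induction l with
  | nil => exact map_one Phi
  | cons i l ih =>
    rw [wprod_cons, map_mul, ih, List.map_cons, List.prod_cons, Phi_gen]

theorem surj_aux : ∀ g : G3, ∃ k : Fin 24, ((Wf k).map Mf).prod = g := by decide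

theorem inj_aux : ∀ k k' : Fin 24,
    ((Wf k).map Mf).prod = ((Wf k').map Mf).prod → k = k' := by decide

theorem Phi_bij : Function.Bijective Phi := by
  constructor
  · intro a b hab
    obtain ⟨k, rfl⟩ := mem_S a
    obtain ⟨k', rfl⟩ := mem_S b
    rw [Phi_wprod, Phi_wprod] at hab
    rw [inj_aux k k' hab]
  · intro g
    obtain ⟨k, hk⟩ := surj_aux g
    exact ⟨wprod (Wf k), (Phi_wprod _).trans hk⟩

end Stmt18Aux

theorem stmt18 :
    Nonempty ((Rack.EnvelGroup XA4 ⧸ KA4) ≃*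
      Matrix.SpecialLinearGroup (Fin 2) (ZMod 3)) :=
  ⟨MulEquiv.ofBijective Stmt18Aux.Phi Stmt18Aux.Phi_bij⟩
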